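/- In the order topology on a linear order L, if a point x is a limit (from the right) of points in its own automorphism orbit, i.e., there is a strictly increasing sequence y_0 < y_1 < ⋯ converging to x with each y_i the image of x under some order-automorphism of L, then x is not contained in any scattered open neighborhood; in particular x has Cantor–Bendixson rank ∞ (x survives all Cantor–Bendixson derivatives). -/
import Mathlib


/-- The points of S that are limit points of S: the Cantor–Bendixson derivative of S. -/
def derivedWithin {X : Type*} [TopologicalSpace X] (S : Set X) : Set X :=
  {x | x ∈ S ∧ ∀ U : Set X, IsOpen U → x ∈ U → ∃ y, y ∈ U ∩ S ∧ y ≠ x}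

/-- The transfinitely iterated Cantor–Bendixson derivative of the whole space:
`cbIter X 0 = univ` and `cbIter X α = ⋂_{β < α} derivedWithin (cbIter X β)`. -/
noncomputable def cbIter (X : Type*) [TopologicalSpace X] : Ordinal → Set X
  | α => ⋂ β : Set.Iio α, derivedWithin (cbIter X β.1)
termination_by α => α
decreasing_by exact β.2

/-- A subset of a space is scattered if each of its nonempty subsets has a point
isolated in that subset. -/
def IsScatteredSet {X : Type*} [TopologicalSpace X] (A : Set X) : Prop :=
  ∀ S : Set X, S ⊆ A → S.Nonempty → ∃ z ∈ S, ∃ V : Set X, IsOpen V ∧ V ∩ S = {z}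

/-- In the order topology on a linear order L, if a point x is a limit
from the right (i.e. from below, via a strictly increasing converging sequence) of
points in its own automorphism orbit, then x lies in no scattered open neighborhood,
and x survives every Cantor–Bendixson derivative (rank ∞). -/
theorem rank_infinity_of_limit_of_orbit {L : Type*} [LinearOrder L]
    [TopologicalSpace L] [OrderTopology L] (x : L) (y : ℕ → L)
    (hmono : StrictMono y) (hlt : ∀ n, y n < x)
    (htend : Filter.Tendsto y Filter.atTop (nhds x))
    (horbit : ∀ n, ∃ f : L ≃o L, f x = y n) :
    (∀ U : Set L, IsOpen U → x ∈ U → ¬ IsScatteredSet U) ∧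
    (∀ α : Ordinal, x ∈ cbIter L α) := by
  set O : Set L := {z | ∃ f : L ≃o L, f x = z} with hO
  have hxO : x ∈ O := ⟨OrderIso.refl L, rfl⟩
  have key : ∀ z ∈ O, ∀ U : Set L, IsOpen U → z ∈ U → ∃ w ∈ U ∩ O, w ≠ z := by
    rintro z ⟨f, rfl⟩ U hU hzU
    have hcont : Filter.Tendsto (fun n => f (y n)) Filter.atTop (nhds (f x)) :=
      ((f.toHomeomorph.continuous.tendsto x).comp htend)
    obtain ⟨n, hn⟩ := (hcont.eventually (hU.eventually_mem hzU)).exists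
    refine ⟨f (y n), ⟨hn, ?_⟩, ne_of_lt (f.strictMono (hlt n))⟩
    obtain ⟨g, hg⟩ := horbit n
    exact ⟨g.trans f, by simp [hg]⟩
  -- O is contained in every CB derivative
  have hOcb : ∀ α : Ordinal, O ⊆ cbIter L α := by
    intro α
    induction α using Ordinal.induction with
    | h α ih =>
      intro z hz
      rw [cbIter]
      refine Set.mem_iInter.2 fun ⟨β, hβ⟩ => ⟨ih β hβ hz, fun U hU hzU => ?_⟩
      obtain ⟨w, ⟨hwU, hwO⟩, hwz⟩ := key z hz U hU hzU
      exact ⟨w, ⟨hwU, ih β hβ hwO⟩, hwz⟩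
  refine ⟨?_, fun α => hOcb α hxO⟩
  intro U hU hxU hscat
  obtain ⟨z, hzS, V, hV, hVS⟩ := hscat (U ∩ O) Set.inter_subset_left ⟨x, hxU, hxO⟩
  have hzV : z ∈ V := by
    have : z ∈ V ∩ (U ∩ O) := by rw [hVS]; rfl
    exact this.1
  obtain ⟨w, ⟨⟨hwV, hwU⟩, hwO⟩, hwz⟩ := key z hzS.2 (V ∩ U) (hV.inter hU) ⟨hzV, hzS.1⟩
  exact hwz (by have : w ∈ V ∩ (U ∩ O) := ⟨hwV, hwU, hwO⟩; rwa [hVS] at this)
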